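/- Let R be a commutative semiring, S a multiplicative subset of R, and A an S-primary k-ideal of R disjoint from S. Let x ∈ R be such that sx ∉ A for every s ∈ S, and let s ∈ S. Then the ideal (A : sx) = {y ∈ R : sxy ∈ A} is an S-primary k-ideal of R disjoint from S, and there exists r ∈ S such that r·√(A : sx) ⊆ √A ⊆ √(A : sx). -/
import Mathlib


/-- For an ideal `A` of a commutative semiring and an element `t`,
the quotient (colon) ideal `(A : t) = {y | t * y ∈ A}`. -/
def colonIdeal {R : Type*} [CommSemiring R] (A : Ideal R) (t : R) : Ideal R where
  carrier := {y : R | t * y ∈ A}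
  add_mem' := fun {a b} ha hb => by simpa [mul_add] using A.add_mem ha hb
  zero_mem' := by simp
  smul_mem' := fun c y hy => by
    simpa [smul_eq_mul, mul_left_comm] using A.mul_mem_left c hy

/-- If `A` is an S-primary k-ideal disjoint from `S` and `x ∈ R` satisfies
`s * x ∉ A` for every `s ∈ S`, then for every `s ∈ S` the ideal `(A : s*x)` is an
S-primary k-ideal disjoint from `S`, and there is `r ∈ S` with
`r • √(A : s*x) ⊆ √A ⊆ √(A : s*x)`. -/
theorem colon_S_primary {R : Type*} [CommSemiring R]
    (S : Set R) (hS1 : (1 : R) ∈ S) (hSmul : ∀ s ∈ S, ∀ t ∈ S, s * t ∈ S)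
    (A : Ideal R) (hAS : Disjoint S (A : Set R))
    (hAk : ∀ a b : R, a + b ∈ A → a ∈ A → b ∈ A)
    (hAprim : ∃ t ∈ S, ∀ a b : R, a * b ∈ A → t * a ∈ A ∨ t * b ∈ A.radical)
    (x : R) (hx : ∀ s ∈ S, s * x ∉ A)
    (s : R) (hs : s ∈ S) :
    Disjoint S ((colonIdeal A (s * x) : Set R)) ∧
    (∀ a b : R, a + b ∈ colonIdeal A (s * x) → a ∈ colonIdeal A (s * x) →
      b ∈ colonIdeal A (s * x)) ∧
    (∃ t ∈ S, ∀ a b : R, a * b ∈ colonIdeal A (s * x) →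
      t * a ∈ colonIdeal A (s * x) ∨ t * b ∈ (colonIdeal A (s * x)).radical) ∧
    (∃ r ∈ S, (∀ y ∈ (colonIdeal A (s * x)).radical, r * y ∈ A.radical) ∧
      A.radical ≤ (colonIdeal A (s * x)).radical) := by
  obtain ⟨t, htS, ht⟩ := hAprim
  have hmem : ∀ y : R, y ∈ colonIdeal A (s * x) ↔ (s * x) * y ∈ A := fun y => Iff.rfl
  have hle : A ≤ colonIdeal A (s * x) := fun a ha => (hmem a).mpr (A.mul_mem_left _ ha)
  refine ⟨?_, ?_, ?_, ?_⟩
  · rw [Set.disjoint_left]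
    intro u huS hu
    have h1 : (s * x) * u ∈ A := (hmem u).mp hu
    have h2 : (u * s) * x ∈ A := by
      rw [show (u * s) * x = (s * x) * u by ring]; exact h1
    exact hx (u * s) (hSmul u huS s hs) h2
  · intro a b hab ha
    exact (hmem b).mpr (hAk _ _ (by simpa [mul_add] using (hmem _).mp hab) ((hmem a).mp ha))
  · refine ⟨t, htS, fun a b hab => ?_⟩
    have h1 : ((s * x) * a) * b ∈ A := by
      rw [mul_assoc]; exact (hmem _).mp hab
    rcases ht _ _ h1 with h | h
    · left
      exact (hmem _).mpr (by rw [show (s * x) * (t * a) = t * ((s * x) * a) by ring]; exact h)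
    · right
      exact Ideal.radical_mono hle h
  · refine ⟨t, htS, fun y hy => ?_, Ideal.radical_mono hle⟩
    obtain ⟨n, hn⟩ := hy
    have h1 : (s * x) * y ^ n ∈ A := (hmem _).mp hn
    rcases ht _ _ h1 with h | h
    · exfalso
      exact hx (t * s) (hSmul t htS s hs) (by rw [mul_assoc]; exact h)
    · -- h : t * y ^ n ∈ A.radical
      rcases Nat.eq_zero_or_pos n with rfl | hnpos
      · exfalso
        exact hx s hs (by simpa using (hmem _).mp hn)
      · have h2 : (t * y) ^ n ∈ A.radical := by
          have : (t * y) ^ n = t ^ (n - 1) * (t * y ^ n) := by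
            rw [mul_pow]
            rw [show t ^ (n-1) * (t * y ^ n) = t ^ (n-1) * t * y ^ n by ring]
            congr 1
            rw [← pow_succ, Nat.sub_add_cancel hnpos]
          rw [this]
          exact Ideal.mul_mem_left _ _ h
        have := Ideal.radical_idem A ▸ (Ideal.mem_radical_iff.mpr ⟨n, h2⟩ :
          t * y ∈ A.radical.radical)
        exact this
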